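/- Let A = M_Ψ · M_Φ be the product of the two explicit 16×16 rational matrices M_Ψ and M_Φ. Then the spectral radius of A equals 16; precisely, (i) 16 is an eigenvalue of A (there is a nonzero v ∈ ℚ^16 with A v = 16 v), and (ii) every complex eigenvalue μ of A satisfies |μ| ≤ 16. (Consequently the induced birational map Ψ ∘ Φ, which is algebraically stable on the corresponding blow-up, has first dynamical degree λ = 16.) -/

import Mathlib

namespace Stmt17

namespace FinNorm
@[simp] lemma s_2_3 : Fin.succ (2 : Fin 3) = (3 : Fin 4) := rfl
@[simp] lemma s_2_4 : Fin.succ (2 : Fin 4) = (3 : Fin 5) := rfl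
@[simp] lemma s_3_4 : Fin.succ (3 : Fin 4) = (4 : Fin 5) := rfl
@[simp] lemma s_2_5 : Fin.succ (2 : Fin 5) = (3 : Fin 6) := rfl
@[simp] lemma s_3_5 : Fin.succ (3 : Fin 5) = (4 : Fin 6) := rfl
@[simp] lemma s_4_5 : Fin.succ (4 : Fin 5) = (5 : Fin 6) := rfl
@[simp] lemma s_2_6 : Fin.succ (2 : Fin 6) = (3 : Fin 7) := rfl
@[simp] lemma s_3_6 : Fin.succ (3 : Fin 6) = (4 : Fin 7) := rfl
@[simp] lemma s_4_6 : Fin.succ (4 : Fin 6) = (5 : Fin 7) := rfl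
@[simp] lemma s_5_6 : Fin.succ (5 : Fin 6) = (6 : Fin 7) := rfl
@[simp] lemma s_2_7 : Fin.succ (2 : Fin 7) = (3 : Fin 8) := rfl
@[simp] lemma s_3_7 : Fin.succ (3 : Fin 7) = (4 : Fin 8) := rfl
@[simp] lemma s_4_7 : Fin.succ (4 : Fin 7) = (5 : Fin 8) := rfl
@[simp] lemma s_5_7 : Fin.succ (5 : Fin 7) = (6 : Fin 8) := rfl
@[simp] lemma s_6_7 : Fin.succ (6 : Fin 7) = (7 : Fin 8) := rfl
@[simp] lemma s_2_8 : Fin.succ (2 : Fin 8) = (3 : Fin 9) := rfl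
@[simp] lemma s_3_8 : Fin.succ (3 : Fin 8) = (4 : Fin 9) := rfl
@[simp] lemma s_4_8 : Fin.succ (4 : Fin 8) = (5 : Fin 9) := rfl
@[simp] lemma s_5_8 : Fin.succ (5 : Fin 8) = (6 : Fin 9) := rfl
@[simp] lemma s_6_8 : Fin.succ (6 : Fin 8) = (7 : Fin 9) := rfl
@[simp] lemma s_7_8 : Fin.succ (7 : Fin 8) = (8 : Fin 9) := rfl
@[simp] lemma s_2_9 : Fin.succ (2 : Fin 9) = (3 : Fin 10) := rfl
@[simp] lemma s_3_9 : Fin.succ (3 : Fin 9) = (4 : Fin 10) := rfl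
@[simp] lemma s_4_9 : Fin.succ (4 : Fin 9) = (5 : Fin 10) := rfl
@[simp] lemma s_5_9 : Fin.succ (5 : Fin 9) = (6 : Fin 10) := rfl
@[simp] lemma s_6_9 : Fin.succ (6 : Fin 9) = (7 : Fin 10) := rfl
@[simp] lemma s_7_9 : Fin.succ (7 : Fin 9) = (8 : Fin 10) := rfl
@[simp] lemma s_8_9 : Fin.succ (8 : Fin 9) = (9 : Fin 10) := rfl
@[simp] lemma s_2_10 : Fin.succ (2 : Fin 10) = (3 : Fin 11) := rfl
@[simp] lemma s_3_10 : Fin.succ (3 : Fin 10) = (4 : Fin 11) := rfl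
@[simp] lemma s_4_10 : Fin.succ (4 : Fin 10) = (5 : Fin 11) := rfl
@[simp] lemma s_5_10 : Fin.succ (5 : Fin 10) = (6 : Fin 11) := rfl
@[simp] lemma s_6_10 : Fin.succ (6 : Fin 10) = (7 : Fin 11) := rfl
@[simp] lemma s_7_10 : Fin.succ (7 : Fin 10) = (8 : Fin 11) := rfl
@[simp] lemma s_8_10 : Fin.succ (8 : Fin 10) = (9 : Fin 11) := rfl
@[simp] lemma s_9_10 : Fin.succ (9 : Fin 10) = (10 : Fin 11) := rfl
@[simp] lemma s_2_11 : Fin.succ (2 : Fin 11) = (3 : Fin 12) := rfl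
@[simp] lemma s_3_11 : Fin.succ (3 : Fin 11) = (4 : Fin 12) := rfl
@[simp] lemma s_4_11 : Fin.succ (4 : Fin 11) = (5 : Fin 12) := rfl
@[simp] lemma s_5_11 : Fin.succ (5 : Fin 11) = (6 : Fin 12) := rfl
@[simp] lemma s_6_11 : Fin.succ (6 : Fin 11) = (7 : Fin 12) := rfl
@[simp] lemma s_7_11 : Fin.succ (7 : Fin 11) = (8 : Fin 12) := rfl
@[simp] lemma s_8_11 : Fin.succ (8 : Fin 11) = (9 : Fin 12) := rfl
@[simp] lemma s_9_11 : Fin.succ (9 : Fin 11) = (10 : Fin 12) := rfl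
@[simp] lemma s_10_11 : Fin.succ (10 : Fin 11) = (11 : Fin 12) := rfl
@[simp] lemma s_2_12 : Fin.succ (2 : Fin 12) = (3 : Fin 13) := rfl
@[simp] lemma s_3_12 : Fin.succ (3 : Fin 12) = (4 : Fin 13) := rfl
@[simp] lemma s_4_12 : Fin.succ (4 : Fin 12) = (5 : Fin 13) := rfl
@[simp] lemma s_5_12 : Fin.succ (5 : Fin 12) = (6 : Fin 13) := rfl
@[simp] lemma s_6_12 : Fin.succ (6 : Fin 12) = (7 : Fin 13) := rfl
@[simp] lemma s_7_12 : Fin.succ (7 : Fin 12) = (8 : Fin 13) := rfl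
@[simp] lemma s_8_12 : Fin.succ (8 : Fin 12) = (9 : Fin 13) := rfl
@[simp] lemma s_9_12 : Fin.succ (9 : Fin 12) = (10 : Fin 13) := rfl
@[simp] lemma s_10_12 : Fin.succ (10 : Fin 12) = (11 : Fin 13) := rfl
@[simp] lemma s_11_12 : Fin.succ (11 : Fin 12) = (12 : Fin 13) := rfl
@[simp] lemma s_2_13 : Fin.succ (2 : Fin 13) = (3 : Fin 14) := rfl
@[simp] lemma s_3_13 : Fin.succ (3 : Fin 13) = (4 : Fin 14) := rfl
@[simp] lemma s_4_13 : Fin.succ (4 : Fin 13) = (5 : Fin 14) := rfl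
@[simp] lemma s_5_13 : Fin.succ (5 : Fin 13) = (6 : Fin 14) := rfl
@[simp] lemma s_6_13 : Fin.succ (6 : Fin 13) = (7 : Fin 14) := rfl
@[simp] lemma s_7_13 : Fin.succ (7 : Fin 13) = (8 : Fin 14) := rfl
@[simp] lemma s_8_13 : Fin.succ (8 : Fin 13) = (9 : Fin 14) := rfl
@[simp] lemma s_9_13 : Fin.succ (9 : Fin 13) = (10 : Fin 14) := rfl
@[simp] lemma s_10_13 : Fin.succ (10 : Fin 13) = (11 : Fin 14) := rfl
@[simp] lemma s_11_13 : Fin.succ (11 : Fin 13) = (12 : Fin 14) := rfl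
@[simp] lemma s_12_13 : Fin.succ (12 : Fin 13) = (13 : Fin 14) := rfl
@[simp] lemma s_2_14 : Fin.succ (2 : Fin 14) = (3 : Fin 15) := rfl
@[simp] lemma s_3_14 : Fin.succ (3 : Fin 14) = (4 : Fin 15) := rfl
@[simp] lemma s_4_14 : Fin.succ (4 : Fin 14) = (5 : Fin 15) := rfl
@[simp] lemma s_5_14 : Fin.succ (5 : Fin 14) = (6 : Fin 15) := rfl
@[simp] lemma s_6_14 : Fin.succ (6 : Fin 14) = (7 : Fin 15) := rfl
@[simp] lemma s_7_14 : Fin.succ (7 : Fin 14) = (8 : Fin 15) := rfl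
@[simp] lemma s_8_14 : Fin.succ (8 : Fin 14) = (9 : Fin 15) := rfl
@[simp] lemma s_9_14 : Fin.succ (9 : Fin 14) = (10 : Fin 15) := rfl
@[simp] lemma s_10_14 : Fin.succ (10 : Fin 14) = (11 : Fin 15) := rfl
@[simp] lemma s_11_14 : Fin.succ (11 : Fin 14) = (12 : Fin 15) := rfl
@[simp] lemma s_12_14 : Fin.succ (12 : Fin 14) = (13 : Fin 15) := rfl
@[simp] lemma s_13_14 : Fin.succ (13 : Fin 14) = (14 : Fin 15) := rfl
@[simp] lemma s_2_15 : Fin.succ (2 : Fin 15) = (3 : Fin 16) := rfl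
@[simp] lemma s_3_15 : Fin.succ (3 : Fin 15) = (4 : Fin 16) := rfl
@[simp] lemma s_4_15 : Fin.succ (4 : Fin 15) = (5 : Fin 16) := rfl
@[simp] lemma s_5_15 : Fin.succ (5 : Fin 15) = (6 : Fin 16) := rfl
@[simp] lemma s_6_15 : Fin.succ (6 : Fin 15) = (7 : Fin 16) := rfl
@[simp] lemma s_7_15 : Fin.succ (7 : Fin 15) = (8 : Fin 16) := rfl
@[simp] lemma s_8_15 : Fin.succ (8 : Fin 15) = (9 : Fin 16) := rfl
@[simp] lemma s_9_15 : Fin.succ (9 : Fin 15) = (10 : Fin 16) := rfl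
@[simp] lemma s_10_15 : Fin.succ (10 : Fin 15) = (11 : Fin 16) := rfl
@[simp] lemma s_11_15 : Fin.succ (11 : Fin 15) = (12 : Fin 16) := rfl
@[simp] lemma s_12_15 : Fin.succ (12 : Fin 15) = (13 : Fin 16) := rfl
@[simp] lemma s_13_15 : Fin.succ (13 : Fin 15) = (14 : Fin 16) := rfl
@[simp] lemma s_14_15 : Fin.succ (14 : Fin 15) = (15 : Fin 16) := rfl
@[simp] lemma c_2_3 {α : Type*} (a : α) (f : Fin 2 → α) : Matrix.vecCons a f (2 : Fin 3) = f (1 : Fin 2) := rfl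
@[simp] lemma c_2_4 {α : Type*} (a : α) (f : Fin 3 → α) : Matrix.vecCons a f (2 : Fin 4) = f (1 : Fin 3) := rfl
@[simp] lemma c_3_4 {α : Type*} (a : α) (f : Fin 3 → α) : Matrix.vecCons a f (3 : Fin 4) = f (2 : Fin 3) := rfl
@[simp] lemma c_2_5 {α : Type*} (a : α) (f : Fin 4 → α) : Matrix.vecCons a f (2 : Fin 5) = f (1 : Fin 4) := rfl
@[simp] lemma c_3_5 {α : Type*} (a : α) (f : Fin 4 → α) : Matrix.vecCons a f (3 : Fin 5) = f (2 : Fin 4) := rfl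
@[simp] lemma c_4_5 {α : Type*} (a : α) (f : Fin 4 → α) : Matrix.vecCons a f (4 : Fin 5) = f (3 : Fin 4) := rfl
@[simp] lemma c_2_6 {α : Type*} (a : α) (f : Fin 5 → α) : Matrix.vecCons a f (2 : Fin 6) = f (1 : Fin 5) := rfl
@[simp] lemma c_3_6 {α : Type*} (a : α) (f : Fin 5 → α) : Matrix.vecCons a f (3 : Fin 6) = f (2 : Fin 5) := rfl
@[simp] lemma c_4_6 {α : Type*} (a : α) (f : Fin 5 → α) : Matrix.vecCons a f (4 : Fin 6) = f (3 : Fin 5) := rfl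
@[simp] lemma c_5_6 {α : Type*} (a : α) (f : Fin 5 → α) : Matrix.vecCons a f (5 : Fin 6) = f (4 : Fin 5) := rfl
@[simp] lemma c_2_7 {α : Type*} (a : α) (f : Fin 6 → α) : Matrix.vecCons a f (2 : Fin 7) = f (1 : Fin 6) := rfl
@[simp] lemma c_3_7 {α : Type*} (a : α) (f : Fin 6 → α) : Matrix.vecCons a f (3 : Fin 7) = f (2 : Fin 6) := rfl
@[simp] lemma c_4_7 {α : Type*} (a : α) (f : Fin 6 → α) : Matrix.vecCons a f (4 : Fin 7) = f (3 : Fin 6) := rfl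
@[simp] lemma c_5_7 {α : Type*} (a : α) (f : Fin 6 → α) : Matrix.vecCons a f (5 : Fin 7) = f (4 : Fin 6) := rfl
@[simp] lemma c_6_7 {α : Type*} (a : α) (f : Fin 6 → α) : Matrix.vecCons a f (6 : Fin 7) = f (5 : Fin 6) := rfl
@[simp] lemma c_2_8 {α : Type*} (a : α) (f : Fin 7 → α) : Matrix.vecCons a f (2 : Fin 8) = f (1 : Fin 7) := rfl
@[simp] lemma c_3_8 {α : Type*} (a : α) (f : Fin 7 → α) : Matrix.vecCons a f (3 : Fin 8) = f (2 : Fin 7) := rfl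
@[simp] lemma c_4_8 {α : Type*} (a : α) (f : Fin 7 → α) : Matrix.vecCons a f (4 : Fin 8) = f (3 : Fin 7) := rfl
@[simp] lemma c_5_8 {α : Type*} (a : α) (f : Fin 7 → α) : Matrix.vecCons a f (5 : Fin 8) = f (4 : Fin 7) := rfl
@[simp] lemma c_6_8 {α : Type*} (a : α) (f : Fin 7 → α) : Matrix.vecCons a f (6 : Fin 8) = f (5 : Fin 7) := rfl
@[simp] lemma c_7_8 {α : Type*} (a : α) (f : Fin 7 → α) : Matrix.vecCons a f (7 : Fin 8) = f (6 : Fin 7) := rfl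
@[simp] lemma c_2_9 {α : Type*} (a : α) (f : Fin 8 → α) : Matrix.vecCons a f (2 : Fin 9) = f (1 : Fin 8) := rfl
@[simp] lemma c_3_9 {α : Type*} (a : α) (f : Fin 8 → α) : Matrix.vecCons a f (3 : Fin 9) = f (2 : Fin 8) := rfl
@[simp] lemma c_4_9 {α : Type*} (a : α) (f : Fin 8 → α) : Matrix.vecCons a f (4 : Fin 9) = f (3 : Fin 8) := rfl
@[simp] lemma c_5_9 {α : Type*} (a : α) (f : Fin 8 → α) : Matrix.vecCons a f (5 : Fin 9) = f (4 : Fin 8) := rfl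
@[simp] lemma c_6_9 {α : Type*} (a : α) (f : Fin 8 → α) : Matrix.vecCons a f (6 : Fin 9) = f (5 : Fin 8) := rfl
@[simp] lemma c_7_9 {α : Type*} (a : α) (f : Fin 8 → α) : Matrix.vecCons a f (7 : Fin 9) = f (6 : Fin 8) := rfl
@[simp] lemma c_8_9 {α : Type*} (a : α) (f : Fin 8 → α) : Matrix.vecCons a f (8 : Fin 9) = f (7 : Fin 8) := rfl
@[simp] lemma c_2_10 {α : Type*} (a : α) (f : Fin 9 → α) : Matrix.vecCons a f (2 : Fin 10) = f (1 : Fin 9) := rfl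
@[simp] lemma c_3_10 {α : Type*} (a : α) (f : Fin 9 → α) : Matrix.vecCons a f (3 : Fin 10) = f (2 : Fin 9) := rfl
@[simp] lemma c_4_10 {α : Type*} (a : α) (f : Fin 9 → α) : Matrix.vecCons a f (4 : Fin 10) = f (3 : Fin 9) := rfl
@[simp] lemma c_5_10 {α : Type*} (a : α) (f : Fin 9 → α) : Matrix.vecCons a f (5 : Fin 10) = f (4 : Fin 9) := rfl
@[simp] lemma c_6_10 {α : Type*} (a : α) (f : Fin 9 → α) : Matrix.vecCons a f (6 : Fin 10) = f (5 : Fin 9) := rfl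
@[simp] lemma c_7_10 {α : Type*} (a : α) (f : Fin 9 → α) : Matrix.vecCons a f (7 : Fin 10) = f (6 : Fin 9) := rfl
@[simp] lemma c_8_10 {α : Type*} (a : α) (f : Fin 9 → α) : Matrix.vecCons a f (8 : Fin 10) = f (7 : Fin 9) := rfl
@[simp] lemma c_9_10 {α : Type*} (a : α) (f : Fin 9 → α) : Matrix.vecCons a f (9 : Fin 10) = f (8 : Fin 9) := rfl
@[simp] lemma c_2_11 {α : Type*} (a : α) (f : Fin 10 → α) : Matrix.vecCons a f (2 : Fin 11) = f (1 : Fin 10) := rfl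
@[simp] lemma c_3_11 {α : Type*} (a : α) (f : Fin 10 → α) : Matrix.vecCons a f (3 : Fin 11) = f (2 : Fin 10) := rfl
@[simp] lemma c_4_11 {α : Type*} (a : α) (f : Fin 10 → α) : Matrix.vecCons a f (4 : Fin 11) = f (3 : Fin 10) := rfl
@[simp] lemma c_5_11 {α : Type*} (a : α) (f : Fin 10 → α) : Matrix.vecCons a f (5 : Fin 11) = f (4 : Fin 10) := rfl
@[simp] lemma c_6_11 {α : Type*} (a : α) (f : Fin 10 → α) : Matrix.vecCons a f (6 : Fin 11) = f (5 : Fin 10) := rfl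
@[simp] lemma c_7_11 {α : Type*} (a : α) (f : Fin 10 → α) : Matrix.vecCons a f (7 : Fin 11) = f (6 : Fin 10) := rfl
@[simp] lemma c_8_11 {α : Type*} (a : α) (f : Fin 10 → α) : Matrix.vecCons a f (8 : Fin 11) = f (7 : Fin 10) := rfl
@[simp] lemma c_9_11 {α : Type*} (a : α) (f : Fin 10 → α) : Matrix.vecCons a f (9 : Fin 11) = f (8 : Fin 10) := rfl
@[simp] lemma c_10_11 {α : Type*} (a : α) (f : Fin 10 → α) : Matrix.vecCons a f (10 : Fin 11) = f (9 : Fin 10) := rfl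
@[simp] lemma c_2_12 {α : Type*} (a : α) (f : Fin 11 → α) : Matrix.vecCons a f (2 : Fin 12) = f (1 : Fin 11) := rfl
@[simp] lemma c_3_12 {α : Type*} (a : α) (f : Fin 11 → α) : Matrix.vecCons a f (3 : Fin 12) = f (2 : Fin 11) := rfl
@[simp] lemma c_4_12 {α : Type*} (a : α) (f : Fin 11 → α) : Matrix.vecCons a f (4 : Fin 12) = f (3 : Fin 11) := rfl
@[simp] lemma c_5_12 {α : Type*} (a : α) (f : Fin 11 → α) : Matrix.vecCons a f (5 : Fin 12) = f (4 : Fin 11) := rfl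
@[simp] lemma c_6_12 {α : Type*} (a : α) (f : Fin 11 → α) : Matrix.vecCons a f (6 : Fin 12) = f (5 : Fin 11) := rfl
@[simp] lemma c_7_12 {α : Type*} (a : α) (f : Fin 11 → α) : Matrix.vecCons a f (7 : Fin 12) = f (6 : Fin 11) := rfl
@[simp] lemma c_8_12 {α : Type*} (a : α) (f : Fin 11 → α) : Matrix.vecCons a f (8 : Fin 12) = f (7 : Fin 11) := rfl
@[simp] lemma c_9_12 {α : Type*} (a : α) (f : Fin 11 → α) : Matrix.vecCons a f (9 : Fin 12) = f (8 : Fin 11) := rfl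
@[simp] lemma c_10_12 {α : Type*} (a : α) (f : Fin 11 → α) : Matrix.vecCons a f (10 : Fin 12) = f (9 : Fin 11) := rfl
@[simp] lemma c_11_12 {α : Type*} (a : α) (f : Fin 11 → α) : Matrix.vecCons a f (11 : Fin 12) = f (10 : Fin 11) := rfl
@[simp] lemma c_2_13 {α : Type*} (a : α) (f : Fin 12 → α) : Matrix.vecCons a f (2 : Fin 13) = f (1 : Fin 12) := rfl
@[simp] lemma c_3_13 {α : Type*} (a : α) (f : Fin 12 → α) : Matrix.vecCons a f (3 : Fin 13) = f (2 : Fin 12) := rfl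
@[simp] lemma c_4_13 {α : Type*} (a : α) (f : Fin 12 → α) : Matrix.vecCons a f (4 : Fin 13) = f (3 : Fin 12) := rfl
@[simp] lemma c_5_13 {α : Type*} (a : α) (f : Fin 12 → α) : Matrix.vecCons a f (5 : Fin 13) = f (4 : Fin 12) := rfl
@[simp] lemma c_6_13 {α : Type*} (a : α) (f : Fin 12 → α) : Matrix.vecCons a f (6 : Fin 13) = f (5 : Fin 12) := rfl
@[simp] lemma c_7_13 {α : Type*} (a : α) (f : Fin 12 → α) : Matrix.vecCons a f (7 : Fin 13) = f (6 : Fin 12) := rfl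
@[simp] lemma c_8_13 {α : Type*} (a : α) (f : Fin 12 → α) : Matrix.vecCons a f (8 : Fin 13) = f (7 : Fin 12) := rfl
@[simp] lemma c_9_13 {α : Type*} (a : α) (f : Fin 12 → α) : Matrix.vecCons a f (9 : Fin 13) = f (8 : Fin 12) := rfl
@[simp] lemma c_10_13 {α : Type*} (a : α) (f : Fin 12 → α) : Matrix.vecCons a f (10 : Fin 13) = f (9 : Fin 12) := rfl
@[simp] lemma c_11_13 {α : Type*} (a : α) (f : Fin 12 → α) : Matrix.vecCons a f (11 : Fin 13) = f (10 : Fin 12) := rfl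
@[simp] lemma c_12_13 {α : Type*} (a : α) (f : Fin 12 → α) : Matrix.vecCons a f (12 : Fin 13) = f (11 : Fin 12) := rfl
@[simp] lemma c_2_14 {α : Type*} (a : α) (f : Fin 13 → α) : Matrix.vecCons a f (2 : Fin 14) = f (1 : Fin 13) := rfl
@[simp] lemma c_3_14 {α : Type*} (a : α) (f : Fin 13 → α) : Matrix.vecCons a f (3 : Fin 14) = f (2 : Fin 13) := rfl
@[simp] lemma c_4_14 {α : Type*} (a : α) (f : Fin 13 → α) : Matrix.vecCons a f (4 : Fin 14) = f (3 : Fin 13) := rfl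
@[simp] lemma c_5_14 {α : Type*} (a : α) (f : Fin 13 → α) : Matrix.vecCons a f (5 : Fin 14) = f (4 : Fin 13) := rfl
@[simp] lemma c_6_14 {α : Type*} (a : α) (f : Fin 13 → α) : Matrix.vecCons a f (6 : Fin 14) = f (5 : Fin 13) := rfl
@[simp] lemma c_7_14 {α : Type*} (a : α) (f : Fin 13 → α) : Matrix.vecCons a f (7 : Fin 14) = f (6 : Fin 13) := rfl
@[simp] lemma c_8_14 {α : Type*} (a : α) (f : Fin 13 → α) : Matrix.vecCons a f (8 : Fin 14) = f (7 : Fin 13) := rfl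
@[simp] lemma c_9_14 {α : Type*} (a : α) (f : Fin 13 → α) : Matrix.vecCons a f (9 : Fin 14) = f (8 : Fin 13) := rfl
@[simp] lemma c_10_14 {α : Type*} (a : α) (f : Fin 13 → α) : Matrix.vecCons a f (10 : Fin 14) = f (9 : Fin 13) := rfl
@[simp] lemma c_11_14 {α : Type*} (a : α) (f : Fin 13 → α) : Matrix.vecCons a f (11 : Fin 14) = f (10 : Fin 13) := rfl
@[simp] lemma c_12_14 {α : Type*} (a : α) (f : Fin 13 → α) : Matrix.vecCons a f (12 : Fin 14) = f (11 : Fin 13) := rfl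
@[simp] lemma c_13_14 {α : Type*} (a : α) (f : Fin 13 → α) : Matrix.vecCons a f (13 : Fin 14) = f (12 : Fin 13) := rfl
@[simp] lemma c_2_15 {α : Type*} (a : α) (f : Fin 14 → α) : Matrix.vecCons a f (2 : Fin 15) = f (1 : Fin 14) := rfl
@[simp] lemma c_3_15 {α : Type*} (a : α) (f : Fin 14 → α) : Matrix.vecCons a f (3 : Fin 15) = f (2 : Fin 14) := rfl
@[simp] lemma c_4_15 {α : Type*} (a : α) (f : Fin 14 → α) : Matrix.vecCons a f (4 : Fin 15) = f (3 : Fin 14) := rfl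
@[simp] lemma c_5_15 {α : Type*} (a : α) (f : Fin 14 → α) : Matrix.vecCons a f (5 : Fin 15) = f (4 : Fin 14) := rfl
@[simp] lemma c_6_15 {α : Type*} (a : α) (f : Fin 14 → α) : Matrix.vecCons a f (6 : Fin 15) = f (5 : Fin 14) := rfl
@[simp] lemma c_7_15 {α : Type*} (a : α) (f : Fin 14 → α) : Matrix.vecCons a f (7 : Fin 15) = f (6 : Fin 14) := rfl
@[simp] lemma c_8_15 {α : Type*} (a : α) (f : Fin 14 → α) : Matrix.vecCons a f (8 : Fin 15) = f (7 : Fin 14) := rfl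
@[simp] lemma c_9_15 {α : Type*} (a : α) (f : Fin 14 → α) : Matrix.vecCons a f (9 : Fin 15) = f (8 : Fin 14) := rfl
@[simp] lemma c_10_15 {α : Type*} (a : α) (f : Fin 14 → α) : Matrix.vecCons a f (10 : Fin 15) = f (9 : Fin 14) := rfl
@[simp] lemma c_11_15 {α : Type*} (a : α) (f : Fin 14 → α) : Matrix.vecCons a f (11 : Fin 15) = f (10 : Fin 14) := rfl
@[simp] lemma c_12_15 {α : Type*} (a : α) (f : Fin 14 → α) : Matrix.vecCons a f (12 : Fin 15) = f (11 : Fin 14) := rfl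
@[simp] lemma c_13_15 {α : Type*} (a : α) (f : Fin 14 → α) : Matrix.vecCons a f (13 : Fin 15) = f (12 : Fin 14) := rfl
@[simp] lemma c_14_15 {α : Type*} (a : α) (f : Fin 14 → α) : Matrix.vecCons a f (14 : Fin 15) = f (13 : Fin 14) := rfl
@[simp] lemma c_2_16 {α : Type*} (a : α) (f : Fin 15 → α) : Matrix.vecCons a f (2 : Fin 16) = f (1 : Fin 15) := rfl
@[simp] lemma c_3_16 {α : Type*} (a : α) (f : Fin 15 → α) : Matrix.vecCons a f (3 : Fin 16) = f (2 : Fin 15) := rfl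
@[simp] lemma c_4_16 {α : Type*} (a : α) (f : Fin 15 → α) : Matrix.vecCons a f (4 : Fin 16) = f (3 : Fin 15) := rfl
@[simp] lemma c_5_16 {α : Type*} (a : α) (f : Fin 15 → α) : Matrix.vecCons a f (5 : Fin 16) = f (4 : Fin 15) := rfl
@[simp] lemma c_6_16 {α : Type*} (a : α) (f : Fin 15 → α) : Matrix.vecCons a f (6 : Fin 16) = f (5 : Fin 15) := rfl
@[simp] lemma c_7_16 {α : Type*} (a : α) (f : Fin 15 → α) : Matrix.vecCons a f (7 : Fin 16) = f (6 : Fin 15) := rfl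
@[simp] lemma c_8_16 {α : Type*} (a : α) (f : Fin 15 → α) : Matrix.vecCons a f (8 : Fin 16) = f (7 : Fin 15) := rfl
@[simp] lemma c_9_16 {α : Type*} (a : α) (f : Fin 15 → α) : Matrix.vecCons a f (9 : Fin 16) = f (8 : Fin 15) := rfl
@[simp] lemma c_10_16 {α : Type*} (a : α) (f : Fin 15 → α) : Matrix.vecCons a f (10 : Fin 16) = f (9 : Fin 15) := rfl
@[simp] lemma c_11_16 {α : Type*} (a : α) (f : Fin 15 → α) : Matrix.vecCons a f (11 : Fin 16) = f (10 : Fin 15) := rfl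
@[simp] lemma c_12_16 {α : Type*} (a : α) (f : Fin 15 → α) : Matrix.vecCons a f (12 : Fin 16) = f (11 : Fin 15) := rfl
@[simp] lemma c_13_16 {α : Type*} (a : α) (f : Fin 15 → α) : Matrix.vecCons a f (13 : Fin 16) = f (12 : Fin 15) := rfl
@[simp] lemma c_14_16 {α : Type*} (a : α) (f : Fin 15 → α) : Matrix.vecCons a f (14 : Fin 16) = f (13 : Fin 15) := rfl
@[simp] lemma c_15_16 {α : Type*} (a : α) (f : Fin 15 → α) : Matrix.vecCons a f (15 : Fin 16) = f (14 : Fin 15) := rfl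
end FinNorm


def MPhi : Matrix (Fin 16) (Fin 16) ℚ :=
  !![5, 4, 0, 0, 0, 0, 0, 1, 1, 1, 1, 0, 0, 0, 0, 0;
    0, 0, 0, 0, 0, 0, 1, 0, 0, 0, 0, 0, 0, 0, 0, 0;
    -1, -1, 1, 0, 0, 0, 0, -1, 0, 0, 0, 0, 0, 0, 0, 0;
    -1, -1, 0, 1, 0, 0, 0, 0, -1, 0, 0, 0, 0, 0, 0, 0;
    -1, -1, 0, 0, 1, 0, 0, 0, 0, -1, 0, 0, 0, 0, 0, 0;
    -1, -1, 0, 0, 0, 1, 0, 0, 0, 0, -1, 0, 0, 0, 0, 0;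
    -4, -3, 0, 0, 0, 0, 0, -1, -1, -1, -1, 0, 0, 0, 0, 0;
    -2, -2, 0, 0, 0, 0, 0, -1, 0, 0, 0, 0, 0, 0, 0, 0;
    -2, -2, 0, 0, 0, 0, 0, 0, -1, 0, 0, 0, 0, 0, 0, 0;
    -2, -2, 0, 0, 0, 0, 0, 0, 0, -1, 0, 0, 0, 0, 0, 0;
    -2, -2, 0, 0, 0, 0, 0, 0, 0, 0, -1, 0, 0, 0, 0, 0;
    0, 0, 0, 0, 0, 0, 0, 0, 0, 0, 0, 0, 0, 0, 0, 0;
    -1, -1, 1, 0, 0, 0, 0, -1, 0, 0, 0, 0, 0, 0, 0, 0;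
    -1, -1, 0, 1, 0, 0, 0, 0, -1, 0, 0, 0, 0, 0, 0, 0;
    -1, -1, 0, 0, 1, 0, 0, 0, 0, -1, 0, 0, 0, 0, 0, 0;
    -1, -1, 0, 0, 0, 1, 0, 0, 0, 0, -1, 0, 0, 0, 0, 0]

def MPsi : Matrix (Fin 16) (Fin 16) ℚ :=
  !![5, 4, 0, 0, 0, 0, 0, 0, 0, 0, 0, 0, 1, 1, 1, 1;
    0, 0, 0, 0, 0, 0, 0, 0, 0, 0, 0, 1, 0, 0, 0, 0;
    -1, -1, 1, 0, 0, 0, 0, 0, 0, 0, 0, 0, -1, 0, 0, 0;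
    -1, -1, 0, 1, 0, 0, 0, 0, 0, 0, 0, 0, 0, -1, 0, 0;
    -1, -1, 0, 0, 1, 0, 0, 0, 0, 0, 0, 0, 0, 0, -1, 0;
    -1, -1, 0, 0, 0, 1, 0, 0, 0, 0, 0, 0, 0, 0, 0, -1;
    0, 0, 0, 0, 0, 0, 0, 0, 0, 0, 0, 0, 0, 0, 0, 0;
    -1, -1, 1, 0, 0, 0, 0, 0, 0, 0, 0, 0, -1, 0, 0, 0;
    -1, -1, 0, 1, 0, 0, 0, 0, 0, 0, 0, 0, 0, -1, 0, 0;
    -1, -1, 0, 0, 1, 0, 0, 0, 0, 0, 0, 0, 0, 0, -1, 0;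
    -1, -1, 0, 0, 0, 1, 0, 0, 0, 0, 0, 0, 0, 0, 0, -1;
    -4, -3, 0, 0, 0, 0, 0, 0, 0, 0, 0, 0, -1, -1, -1, -1;
    -2, -2, 0, 0, 0, 0, 0, 0, 0, 0, 0, 0, -1, 0, 0, 0;
    -2, -2, 0, 0, 0, 0, 0, 0, 0, 0, 0, 0, 0, -1, 0, 0;
    -2, -2, 0, 0, 0, 0, 0, 0, 0, 0, 0, 0, 0, 0, -1, 0;
    -2, -2, 0, 0, 0, 0, 0, 0, 0, 0, 0, 0, 0, 0, 0, -1]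

set_option maxHeartbeats 4000000 in
/-- The spectral radius of `A = M_Ψ · M_Φ` equals `16`: (i) `16` is an eigenvalue of `A`,
and (ii) every complex eigenvalue `μ` of `A` satisfies `|μ| ≤ 16`. Consequently the induced
birational self-map `Ψ ∘ Φ` of the exceptional divisor, which is algebraically stable on the
corresponding blow-up, has first dynamical degree `λ = 16`. -/
theorem spectral_radius_eq_sixteen :
    (∃ v : Fin 16 → ℚ, v ≠ 0 ∧ (MPsi * MPhi).mulVec v = (16 : ℚ) • v) ∧
    (∀ μ : ℂ, ∀ v : Fin 16 → ℂ, v ≠ 0 →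
      ((MPsi * MPhi).map ((↑) : ℚ → ℂ)).mulVec v = μ • v → ‖μ‖ ≤ 16) := by
  constructor
  · refine ⟨![(-16 : ℚ), 0, 4, 4, 4, 4, 0, 4, 4, 4, 4, 12, 7, 7, 7, 7], ?_, ?_⟩
    · intro h
      have := congrFun h 0
      norm_num at this
    · rw [← Matrix.mulVec_mulVec]
      have h1 : MPhi.mulVec ![(-16 : ℚ), 0, 4, 4, 4, 4, 0, 4, 4, 4, 4, 12, 7, 7, 7, 7] =
          ![(-64 : ℚ), 0, 16, 16, 16, 16, 48, 28, 28, 28, 28, 0, 16, 16, 16, 16] := by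
        funext j
        fin_cases j <;>
          norm_num [MPhi, Matrix.mulVec, dotProduct, Fin.sum_univ_succ]
      rw [h1]
      funext j
      fin_cases j <;>
        norm_num [MPsi, Matrix.mulVec, dotProduct, Fin.sum_univ_succ]
  · intro μ v hv0 hv
    rcases eq_or_ne μ 0 with rfl | hmu
    · rw [norm_zero]; norm_num
    have hsplit : ((MPsi * MPhi).map ((↑) : ℚ → ℂ)) =
        (MPsi.map ((↑) : ℚ → ℂ)) * (MPhi.map ((↑) : ℚ → ℂ)) :=
      Matrix.map_mul (f := Rat.castHom ℂ)
    rw [hsplit, ← Matrix.mulVec_mulVec] at hv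
    set w := (MPhi.map ((↑) : ℚ → ℂ)).mulVec v with hwdef
    have hv' : (MPsi.map ((↑) : ℚ → ℂ)).mulVec w = μ • v := hv
    have d0 : w 0 = 5 * v 0 + 4 * v 1 + v 7 + v 8 + v 9 + v 10 := by
      rw [hwdef]
      simp [Matrix.mulVec, dotProduct, Fin.sum_univ_succ, MPhi, Matrix.map_apply]
      try ring
    have d1 : w 1 = v 6 := by
      rw [hwdef]
      simp [Matrix.mulVec, dotProduct, Fin.sum_univ_succ, MPhi, Matrix.map_apply]
      try ring
    have d2 : w 2 = -v 0 - v 1 + v 2 - v 7 := by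
      rw [hwdef]
      simp [Matrix.mulVec, dotProduct, Fin.sum_univ_succ, MPhi, Matrix.map_apply]
      try ring
    have d3 : w 3 = -v 0 - v 1 + v 3 - v 8 := by
      rw [hwdef]
      simp [Matrix.mulVec, dotProduct, Fin.sum_univ_succ, MPhi, Matrix.map_apply]
      try ring
    have d4 : w 4 = -v 0 - v 1 + v 4 - v 9 := by
      rw [hwdef]
      simp [Matrix.mulVec, dotProduct, Fin.sum_univ_succ, MPhi, Matrix.map_apply]
      try ring
    have d5 : w 5 = -v 0 - v 1 + v 5 - v 10 := by
      rw [hwdef]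
      simp [Matrix.mulVec, dotProduct, Fin.sum_univ_succ, MPhi, Matrix.map_apply]
      try ring
    have d6 : w 6 = -4 * v 0 - 3 * v 1 - v 7 - v 8 - v 9 - v 10 := by
      rw [hwdef]
      simp [Matrix.mulVec, dotProduct, Fin.sum_univ_succ, MPhi, Matrix.map_apply]
      try ring
    have d7 : w 7 = -2 * v 0 - 2 * v 1 - v 7 := by
      rw [hwdef]
      simp [Matrix.mulVec, dotProduct, Fin.sum_univ_succ, MPhi, Matrix.map_apply]
      try ring
    have d8 : w 8 = -2 * v 0 - 2 * v 1 - v 8 := by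
      rw [hwdef]
      simp [Matrix.mulVec, dotProduct, Fin.sum_univ_succ, MPhi, Matrix.map_apply]
      try ring
    have d9 : w 9 = -2 * v 0 - 2 * v 1 - v 9 := by
      rw [hwdef]
      simp [Matrix.mulVec, dotProduct, Fin.sum_univ_succ, MPhi, Matrix.map_apply]
      try ring
    have d10 : w 10 = -2 * v 0 - 2 * v 1 - v 10 := by
      rw [hwdef]
      simp [Matrix.mulVec, dotProduct, Fin.sum_univ_succ, MPhi, Matrix.map_apply]
      try ring
    have d11 : w 11 = 0 := by
      rw [hwdef]
      simp [Matrix.mulVec, dotProduct, Fin.sum_univ_succ, MPhi, Matrix.map_apply]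
      try ring
    have d12 : w 12 = -v 0 - v 1 + v 2 - v 7 := by
      rw [hwdef]
      simp [Matrix.mulVec, dotProduct, Fin.sum_univ_succ, MPhi, Matrix.map_apply]
      try ring
    have d13 : w 13 = -v 0 - v 1 + v 3 - v 8 := by
      rw [hwdef]
      simp [Matrix.mulVec, dotProduct, Fin.sum_univ_succ, MPhi, Matrix.map_apply]
      try ring
    have d14 : w 14 = -v 0 - v 1 + v 4 - v 9 := by
      rw [hwdef]
      simp [Matrix.mulVec, dotProduct, Fin.sum_univ_succ, MPhi, Matrix.map_apply]
      try ring
    have d15 : w 15 = -v 0 - v 1 + v 5 - v 10 := by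
      rw [hwdef]
      simp [Matrix.mulVec, dotProduct, Fin.sum_univ_succ, MPhi, Matrix.map_apply]
      try ring
    have h0 := congrFun hv' 0
    simp [Matrix.mulVec, dotProduct, Fin.sum_univ_succ, MPsi, Matrix.map_apply] at h0
    have E0 : μ * v 0 = 21 * v 0 + 16 * v 1 + v 2 + v 3 + v 4 + v 5 + 4 * v 6 + 4 * v 7 + 4 * v 8 + 4 * v 9 + 4 * v 10 := by linear_combination (-h0 + 5 * d0 + 4 * d1 + d12 + d13 + d14 + d15)
    have h1 := congrFun hv' 1
    simp [Matrix.mulVec, dotProduct, Fin.sum_univ_succ, MPsi, Matrix.map_apply] at h1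
    have E1 : μ * v 1 = 0 := by linear_combination (-h1 + d11)
    have h2 := congrFun hv' 2
    simp [Matrix.mulVec, dotProduct, Fin.sum_univ_succ, MPsi, Matrix.map_apply] at h2
    have E2 : μ * v 2 = -5 * v 0 - 4 * v 1 - v 6 - v 7 - v 8 - v 9 - v 10 := by linear_combination (-h2 - d0 - d1 + d2 - d12)
    have h3 := congrFun hv' 3
    simp [Matrix.mulVec, dotProduct, Fin.sum_univ_succ, MPsi, Matrix.map_apply] at h3
    have E3 : μ * v 3 = -5 * v 0 - 4 * v 1 - v 6 - v 7 - v 8 - v 9 - v 10 := by linear_combination (-h3 - d0 - d1 + d3 - d13)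
    have h4 := congrFun hv' 4
    simp [Matrix.mulVec, dotProduct, Fin.sum_univ_succ, MPsi, Matrix.map_apply] at h4
    have E4 : μ * v 4 = -5 * v 0 - 4 * v 1 - v 6 - v 7 - v 8 - v 9 - v 10 := by linear_combination (-h4 - d0 - d1 + d4 - d14)
    have h5 := congrFun hv' 5
    simp [Matrix.mulVec, dotProduct, Fin.sum_univ_succ, MPsi, Matrix.map_apply] at h5
    have E5 : μ * v 5 = -5 * v 0 - 4 * v 1 - v 6 - v 7 - v 8 - v 9 - v 10 := by linear_combination (-h5 - d0 - d1 + d5 - d15)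
    have h6 := congrFun hv' 6
    simp [Matrix.mulVec, dotProduct, Fin.sum_univ_succ, MPsi, Matrix.map_apply] at h6
    have E6 : μ * v 6 = 0 := by rcases h6 with h | h <;> simp [h]
    have h7 := congrFun hv' 7
    simp [Matrix.mulVec, dotProduct, Fin.sum_univ_succ, MPsi, Matrix.map_apply] at h7
    have E7 : μ * v 7 = -5 * v 0 - 4 * v 1 - v 6 - v 7 - v 8 - v 9 - v 10 := by linear_combination (-h7 - d0 - d1 + d2 - d12)
    have h8 := congrFun hv' 8
    simp [Matrix.mulVec, dotProduct, Fin.sum_univ_succ, MPsi, Matrix.map_apply] at h8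
    have E8 : μ * v 8 = -5 * v 0 - 4 * v 1 - v 6 - v 7 - v 8 - v 9 - v 10 := by linear_combination (-h8 - d0 - d1 + d3 - d13)
    have h9 := congrFun hv' 9
    simp [Matrix.mulVec, dotProduct, Fin.sum_univ_succ, MPsi, Matrix.map_apply] at h9
    have E9 : μ * v 9 = -5 * v 0 - 4 * v 1 - v 6 - v 7 - v 8 - v 9 - v 10 := by linear_combination (-h9 - d0 - d1 + d4 - d14)
    have h10 := congrFun hv' 10
    simp [Matrix.mulVec, dotProduct, Fin.sum_univ_succ, MPsi, Matrix.map_apply] at h10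
    have E10 : μ * v 10 = -5 * v 0 - 4 * v 1 - v 6 - v 7 - v 8 - v 9 - v 10 := by linear_combination (-h10 - d0 - d1 + d5 - d15)
    have h11 := congrFun hv' 11
    simp [Matrix.mulVec, dotProduct, Fin.sum_univ_succ, MPsi, Matrix.map_apply] at h11
    have E11 : μ * v 11 = -16 * v 0 - 12 * v 1 - v 2 - v 3 - v 4 - v 5 - 3 * v 6 - 3 * v 7 - 3 * v 8 - 3 * v 9 - 3 * v 10 := by linear_combination (-h11 - 4 * d0 - 3 * d1 - d12 - d13 - d14 - d15)
    have h12 := congrFun hv' 12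
    simp [Matrix.mulVec, dotProduct, Fin.sum_univ_succ, MPsi, Matrix.map_apply] at h12
    have E12 : μ * v 12 = -9 * v 0 - 7 * v 1 - v 2 - 2 * v 6 - v 7 - 2 * v 8 - 2 * v 9 - 2 * v 10 := by linear_combination (-h12 - 2 * d0 - 2 * d1 - d12)
    have h13 := congrFun hv' 13
    simp [Matrix.mulVec, dotProduct, Fin.sum_univ_succ, MPsi, Matrix.map_apply] at h13
    have E13 : μ * v 13 = -9 * v 0 - 7 * v 1 - v 3 - 2 * v 6 - 2 * v 7 - v 8 - 2 * v 9 - 2 * v 10 := by linear_combination (-h13 - 2 * d0 - 2 * d1 - d13)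
    have h14 := congrFun hv' 14
    simp [Matrix.mulVec, dotProduct, Fin.sum_univ_succ, MPsi, Matrix.map_apply] at h14
    have E14 : μ * v 14 = -9 * v 0 - 7 * v 1 - v 4 - 2 * v 6 - 2 * v 7 - 2 * v 8 - v 9 - 2 * v 10 := by linear_combination (-h14 - 2 * d0 - 2 * d1 - d14)
    have h15 := congrFun hv' 15
    simp [Matrix.mulVec, dotProduct, Fin.sum_univ_succ, MPsi, Matrix.map_apply] at h15
    have E15 : μ * v 15 = -9 * v 0 - 7 * v 1 - v 5 - 2 * v 6 - 2 * v 7 - 2 * v 8 - 2 * v 9 - v 10 := by linear_combination (-h15 - 2 * d0 - 2 * d1 - d15)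

    -- now the case analysis
    have hv1 : v 1 = 0 := by
      rcases mul_eq_zero.mp (by linear_combination E1 : μ * v 1 = 0) with h|h
      · exact absurd h hmu
      · exact h
    have hv6 : v 6 = 0 := by
      rcases mul_eq_zero.mp (by linear_combination E6 : μ * v 6 = 0) with h|h
      · exact absurd h hmu
      · exact h
    have hq : μ * (v 2 + v 3 + v 4 + v 5) = -20 * v 0 - 4 * (v 7 + v 8 + v 9 + v 10) := by
      linear_combination E2 + E3 + E4 + E5 - 16 * hv1 - 4 * hv6
    have hu : μ * (v 7 + v 8 + v 9 + v 10) = -20 * v 0 - 4 * (v 7 + v 8 + v 9 + v 10) := by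
      linear_combination E7 + E8 + E9 + E10 - 16 * hv1 - 4 * hv6
    have hqu : v 2 + v 3 + v 4 + v 5 = v 7 + v 8 + v 9 + v 10 :=
      mul_left_cancel₀ hmu (hq.trans hu.symm)
    have hF0 : μ * v 0 = 21 * v 0 + 5 * (v 7 + v 8 + v 9 + v 10) := by
      linear_combination E0 + 16 * hv1 + 4 * hv6 + hqu
    have key0 : (μ ^ 2 - 17 * μ + 16) * v 0 = 0 := by
      linear_combination (μ + 4) * hF0 + 5 * hu
    have keyu : (μ ^ 2 - 17 * μ + 16) * (v 7 + v 8 + v 9 + v 10) = 0 := by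
      linear_combination (-20 : ℂ) * hF0 + (μ - 21) * hu
    by_cases hpoly : μ ^ 2 - 17 * μ + 16 = 0
    · have hfac : (μ - 1) * (μ - 16) = 0 := by linear_combination hpoly
      rcases mul_eq_zero.mp hfac with h | h
      · have : μ = 1 := by linear_combination h
        rw [this]
        simp
      · have : μ = 16 := by linear_combination h
        rw [this]
        rw [show ((16 : ℂ)) = ((16 : ℝ) : ℂ) by norm_num, Complex.norm_real]
        norm_num
    · exfalso
      have h0 : v 0 = 0 := (mul_eq_zero.mp key0).resolve_left hpoly
      have hu0 : v 7 + v 8 + v 9 + v 10 = 0 := (mul_eq_zero.mp keyu).resolve_left hpoly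
      have hz : ∀ i, μ * v i = 0 → v i = 0 := fun i h =>
        (mul_eq_zero.mp h).resolve_left hmu
      have hv2 : v 2 = 0 := hz 2 (by linear_combination E2 - 5 * h0 - 4 * hv1 - hv6 - hu0)
      have hv3 : v 3 = 0 := hz 3 (by linear_combination E3 - 5 * h0 - 4 * hv1 - hv6 - hu0)
      have hv4 : v 4 = 0 := hz 4 (by linear_combination E4 - 5 * h0 - 4 * hv1 - hv6 - hu0)
      have hv5 : v 5 = 0 := hz 5 (by linear_combination E5 - 5 * h0 - 4 * hv1 - hv6 - hu0)
      have hv7 : v 7 = 0 := hz 7 (by linear_combination E7 - 5 * h0 - 4 * hv1 - hv6 - hu0)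
      have hv8 : v 8 = 0 := hz 8 (by linear_combination E8 - 5 * h0 - 4 * hv1 - hv6 - hu0)
      have hv9 : v 9 = 0 := hz 9 (by linear_combination E9 - 5 * h0 - 4 * hv1 - hv6 - hu0)
      have hv10 : v 10 = 0 := hz 10 (by linear_combination E10 - 5 * h0 - 4 * hv1 - hv6 - hu0)
      have hv11 : v 11 = 0 := hz 11 (by
        linear_combination E11 - 16 * h0 - 12 * hv1 - hv2 - hv3 - hv4 - hv5 - 3 * hv6
          - 3 * hv7 - 3 * hv8 - 3 * hv9 - 3 * hv10)
      have hv12 : v 12 = 0 := hz 12 (by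
        linear_combination E12 - 9 * h0 - 7 * hv1 - hv2 - 2 * hv6 - hv7 - 2 * hv8 - 2 * hv9 - 2 * hv10)
      have hv13 : v 13 = 0 := hz 13 (by
        linear_combination E13 - 9 * h0 - 7 * hv1 - hv3 - 2 * hv6 - 2 * hv7 - hv8 - 2 * hv9 - 2 * hv10)
      have hv14 : v 14 = 0 := hz 14 (by
        linear_combination E14 - 9 * h0 - 7 * hv1 - hv4 - 2 * hv6 - 2 * hv7 - 2 * hv8 - hv9 - 2 * hv10)
      have hv15 : v 15 = 0 := hz 15 (by
        linear_combination E15 - 9 * h0 - 7 * hv1 - hv5 - 2 * hv6 - 2 * hv7 - 2 * hv8 - 2 * hv9 - hv10)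
      apply hv0
      funext i
      fin_cases i <;> first
        | exact h0 | exact hv1 | exact hv2 | exact hv3 | exact hv4 | exact hv5
        | exact hv6 | exact hv7 | exact hv8 | exact hv9 | exact hv10 | exact hv11
        | exact hv12 | exact hv13 | exact hv14 | exact hv15

end Stmt17
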